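/- Let X be a heap, f an idempotent heap endomorphism of X with kernel ω and image Y, e ∈ Y, and K = [e]_ω. Then Y is a normal subheap of X if and only if [y,e,k] = [k,e,y] for every y ∈ Y and k ∈ K. -/
import Mathlib


/-- A heap: a set with an associative Mal'tsev ternary operation. -/
structure Heap (X : Type*) where
  op : X → X → X → X
  mal1 : ∀ x y, op x x y = y
  mal2 : ∀ x y, op x y y = x
  assoc : ∀ x y z w u, op (op x y z) w u = op x y (op z w u)

/-- Let `X` be a heap, `f` an idempotent heap endomorphism with kernel
`ω = {(x,y) : f x = f y}` and image `Y = f(X)`, `e ∈ Y`, and `K = [e]_ω`. Then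
`Y` is a normal subheap of `X` (nonempty and `[[x,a,s],x,a] ∈ Y` for all `x ∈ X`
and `a, s ∈ Y`) if and only if `[y,e,k] = [k,e,y]` for every `y ∈ Y`, `k ∈ K`. -/
theorem stmt19 {X : Type*} (H : Heap X) (f : X → X)
    (hf_endo : ∀ x y z, f (H.op x y z) = H.op (f x) (f y) (f z))
    (hf_idem : f ∘ f = f)
    (e : X) (he : e ∈ Set.range f) :
    ((Set.range f).Nonempty ∧
        ∀ x : X, ∀ a ∈ Set.range f, ∀ s ∈ Set.range f,
          H.op (H.op x a s) x a ∈ Set.range f)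
      ↔ (∀ y ∈ Set.range f, ∀ k ∈ {x | f x = f e}, H.op y e k = H.op k e y) := by
  have cancel : ∀ a b t : X, H.op a b (H.op b a t) = t := by
    intro a b t; rw [← H.assoc, H.mal2, H.mal1]
  have P : ∀ v z w u : X, H.op v (H.op z w v) u = H.op w z u := by
    intro v z w u
    have h1 : H.op (H.op z w v) v (H.op w z u) = u := by
      rw [H.assoc, H.mal1, ← H.assoc, H.mal2, H.mal1]
    calc H.op v (H.op z w v) u
        = H.op v (H.op z w v) (H.op (H.op z w v) v (H.op w z u)) := by rw [h1]
      _ = H.op w z u := cancel _ _ _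
  have mid : ∀ x z w v u : X, H.op x (H.op z w v) u = H.op x v (H.op w z u) := by
    intro x z w v u
    conv_lhs => rw [← H.mal2 x v]
    rw [H.assoc, P]
  have hfix : ∀ y ∈ Set.range f, f y = y := by
    rintro y ⟨z, rfl⟩; exact congrFun hf_idem z
  have hfe : f e = e := hfix e he
  constructor
  · rintro ⟨-, hN⟩ y hy k hk
    have hfk : f k = e := by rw [Set.mem_setOf_eq] at hk; rw [hk, hfe]
    have hu : H.op (H.op k e y) k e ∈ Set.range f := hN k e he y hy
    have hu2 : H.op (H.op k e y) k e = y := by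
      have h := hfix _ hu
      rw [hf_endo, hf_endo, hfk, hfe, hfix y hy, H.mal1, H.mal2] at h
      exact h.symm
    conv_lhs => rw [← hu2]
    rw [H.assoc, H.mal1, H.mal2]
  · intro hcomm
    refine ⟨⟨e, he⟩, fun x a ha s hs => ?_⟩
    set y := f x with hy
    have hyY : y ∈ Set.range f := ⟨x, rfl⟩
    have hfy : f y = y := hfix y hyY
    have hfa : f a = a := hfix a ha
    have hfs : f s = s := hfix s hs
    set k := H.op x y e with hk
    have hfk : f k = e := by rw [hk, hf_endo, hfe, ← hy, hfy, H.mal1]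
    have hkK : k ∈ {x | f x = f e} := by rw [Set.mem_setOf_eq, hfk, hfe]
    have hx : H.op k e y = x := by rw [hk, H.assoc, H.mal1, H.mal2]
    have hhY : H.op (H.op y a s) y e ∈ Set.range f :=
      ⟨H.op (H.op y a s) y e, by rw [hf_endo, hf_endo, hfy, hfa, hfs, hfe]⟩
    have hcom : H.op k e (H.op (H.op y a s) y e)
        = H.op (H.op (H.op y a s) y e) e k := (hcomm _ hhY k hkK).symm
    have key : H.op (H.op x a s) x a = H.op (H.op (H.op y a s) y e) e a := by
      calc H.op (H.op x a s) x a
          = H.op (H.op (H.op k e y) a s) (H.op k e y) a := by rw [hx]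
        _ = H.op (H.op k e (H.op y a s)) (H.op k e y) a := by
            rw [H.assoc k e y a s]
        _ = H.op k e (H.op (H.op y a s) (H.op k e y) a) :=
            H.assoc k e (H.op y a s) (H.op k e y) a
        _ = H.op k e (H.op (H.op y a s) y (H.op e k a)) := by
            rw [mid (H.op y a s) k e y a]
        _ = H.op k e (H.op (H.op (H.op y a s) y e) k a) := by
            rw [← H.assoc (H.op y a s) y e k a]
        _ = H.op (H.op k e (H.op (H.op y a s) y e)) k a :=
            (H.assoc k e (H.op (H.op y a s) y e) k a).symm
        _ = H.op (H.op (H.op (H.op y a s) y e) e k) k a := by rw [hcom]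
        _ = H.op (H.op (H.op y a s) y e) e (H.op k k a) :=
            H.assoc (H.op (H.op y a s) y e) e k k a
        _ = H.op (H.op (H.op y a s) y e) e a := by rw [H.mal1]
    rw [key]
    exact ⟨H.op (H.op (H.op y a s) y e) e a,
      by rw [hf_endo, hf_endo, hf_endo, hfy, hfa, hfs, hfe]⟩
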